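/- Let T be a symmetric third-order tensor on R^d with Frobenius norm 1, and let p = max over unit vectors v of T(v,v,v), assumed positive. Define f(x,z) = -T(x,x,x) + ||x||^4 + z^4 and gamma(alpha) = f(alpha x*, (1-alpha) z0) where x* is a global minimizer direction scaled so that ||x*|| = 3p/4 and T(x*/||x*||, x*/||x*||, x*/||x*||) = p, and |z0| > 3*sqrt(2)/4. Then gamma''(alpha) > 0 for all alpha in [0,1], i.e., gamma is strictly convex on [0,1]. -/

import Mathlib

private lemma z0pow (z0 : ℝ) (hz0 : 3 * Real.sqrt 2 / 4 < |z0|) :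
    81 / 64 < z0 ^ 4 := by
  have h2 : (0:ℝ) ≤ Real.sqrt 2 := Real.sqrt_nonneg 2
  have hs2 : Real.sqrt 2 ^ 2 = 2 := Real.sq_sqrt (by norm_num)
  have h0 : (0:ℝ) ≤ 3 * Real.sqrt 2 / 4 := by positivity
  have h4 : (3 * Real.sqrt 2 / 4) ^ 4 < |z0| ^ 4 := by
    exact pow_lt_pow_left₀ hz0 h0 (by norm_num)
  have : (3 * Real.sqrt 2 / 4) ^ 4 = 81 / 64 := by
    have : (3 * Real.sqrt 2 / 4) ^ 4 = 81 * (Real.sqrt 2 ^ 2) ^ 2 / 256 := by ring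
    rw [this, hs2]; norm_num
  calc (81:ℝ)/64 = (3 * Real.sqrt 2 / 4) ^ 4 := this.symm
    _ < |z0| ^ 4 := h4
    _ = z0 ^ 4 := by rw [← abs_pow]; exact abs_of_nonneg (by positivity)

private lemma key (p s z0 : ℝ) (hp0 : 0 < p) (hp1 : p ≤ 1) (hs : s = 3 * p / 4)
    (hz : 81 / 64 < z0 ^ 4) :
    ∀ α ∈ Set.Icc (0 : ℝ) 1,
      0 < -6 * α * s ^ 3 * p + 12 * α ^ 2 * s ^ 4 + 12 * (1 - α) ^ 2 * z0 ^ 4 := by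
  intro α ⟨h0, h1⟩
  subst hs
  have hp4 : p ^ 4 ≤ 1 := by
    calc p ^ 4 ≤ 1 ^ 4 := pow_le_pow_left₀ hp0.le hp1 4
      _ = 1 := one_pow 4
  nlinarith [sq_nonneg (1 - α), sq_nonneg α, sq_nonneg (13 - 15*α), mul_pos hp0 hp0,
    mul_nonneg (mul_nonneg h0 h0) (sq_nonneg (1-α)),
    mul_nonneg (sq_nonneg (13 - 15*α)) (pow_pos hp0 4).le,
    mul_nonneg (mul_nonneg h0 (sub_nonneg.2 h1)) (pow_pos hp0 4).le]

theorem stmt_3 (p s z0 : ℝ) (hp0 : 0 < p) (hp1 : p ≤ 1) (hs : s = 3 * p / 4)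
    (hz0 : 3 * Real.sqrt 2 / 4 < |z0|) :
    (∀ α ∈ Set.Icc (0 : ℝ) 1,
      0 < -6 * α * s ^ 3 * p + 12 * α ^ 2 * s ^ 4 + 12 * (1 - α) ^ 2 * z0 ^ 4) ∧
    StrictConvexOn ℝ (Set.Icc (0 : ℝ) 1)
      (fun α => -α ^ 3 * s ^ 3 * p + α ^ 4 * s ^ 4 + (1 - α) ^ 4 * z0 ^ 4) := by
  have hz : 81 / 64 < z0 ^ 4 := z0pow z0 hz0
  have hkey := key p s z0 hp0 hp1 hs hz
  refine ⟨hkey, ?_⟩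
  set f : ℝ → ℝ := fun α => -α ^ 3 * s ^ 3 * p + α ^ 4 * s ^ 4 + (1 - α) ^ 4 * z0 ^ 4
  set f' : ℝ → ℝ := fun α => -(3 * α ^ 2) * s ^ 3 * p + 4 * α ^ 3 * s ^ 4
      - 4 * (1 - α) ^ 3 * z0 ^ 4
  have hd1 : ∀ x : ℝ, HasDerivAt f (f' x) x := by
    intro x
    have h1 : HasDerivAt (fun α : ℝ => α ^ 3) (3 * x ^ 2) x := by
      simpa using hasDerivAt_pow 3 x
    have h2 : HasDerivAt (fun α : ℝ => α ^ 4) (4 * x ^ 3) x := by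
      simpa using hasDerivAt_pow 4 x
    have h3 : HasDerivAt (fun α : ℝ => (1 - α) ^ 4) (-(4 * (1 - x) ^ 3)) x := by
      have := ((hasDerivAt_id x).const_sub 1).pow 4
      simpa [Pi.pow_def] using this
    have := (((h1.neg.mul_const (s ^ 3)).mul_const p).add
        ((h2.mul_const (s ^ 4)))).add (h3.mul_const (z0 ^ 4))
    refine this.congr_deriv ?_
    simp only [f']
    ring
  have hd2 : ∀ x : ℝ, HasDerivAt f'
      (-6 * x * s ^ 3 * p + 12 * x ^ 2 * s ^ 4 + 12 * (1 - x) ^ 2 * z0 ^ 4) x := by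
    intro x
    have h1 : HasDerivAt (fun α : ℝ => α ^ 2) (2 * x) x := by
      simpa using hasDerivAt_pow 2 x
    have h2 : HasDerivAt (fun α : ℝ => α ^ 3) (3 * x ^ 2) x := by
      simpa using hasDerivAt_pow 3 x
    have h3 : HasDerivAt (fun α : ℝ => (1 - α) ^ 3) (-(3 * (1 - x) ^ 2)) x := by
      have := ((hasDerivAt_id x).const_sub 1).pow 3
      simpa [Pi.pow_def] using this
    have := ((((h1.const_mul (3:ℝ)).neg.mul_const (s ^ 3)).mul_const p).add
        ((h2.const_mul (4:ℝ)).mul_const (s ^ 4))).sub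
        ((h3.const_mul (4:ℝ)).mul_const (z0 ^ 4))
    refine this.congr_deriv ?_
    ring
  have hderiv1 : deriv f = f' := funext fun x => (hd1 x).deriv
  apply strictConvexOn_of_deriv2_pos (convex_Icc 0 1)
  · exact Continuous.continuousOn (by continuity)
  · intro x hx
    rw [interior_Icc] at hx
    have : deriv (deriv f) x
        = -6 * x * s ^ 3 * p + 12 * x ^ 2 * s ^ 4 + 12 * (1 - x) ^ 2 * z0 ^ 4 := by
      rw [hderiv1]; exact (hd2 x).deriv
    simp only [Function.iterate_succ, Function.iterate_zero, Function.comp_apply, id]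
    rw [this]
    exact hkey x ⟨hx.1.le, hx.2.le⟩
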